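/- Walk generating function identity: let A be the adjacency matrix of a graph G and S a subset of vertices. Define W_S(t) = ((I − tA)⁻¹)_{S,S}, the S×S principal submatrix of the walk generating matrix, and define W*_S(t) = t·R(1/t, S, A), where R is the isospectral reduction. Then W_S(t) = (I − W*_S(t))⁻¹ for all t ≠ 0 in a neighborhood of 0 where all matrices are defined. -/

import Mathlib

open Matrix

/-- Isospectral reduction of a matrix indexed by `α ⊕ β` down to `α`. -/
noncomputable def red {α β : Type} [Fintype α] [Fintype β] [DecidableEq α] [DecidableEq β]
    (lam : ℂ) (A : Matrix (α ⊕ β) (α ⊕ β) ℂ) : Matrix α α ℂ :=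
  A.toBlocks₁₁ + A.toBlocks₁₂ * (lam • (1 : Matrix β β ℂ) - A.toBlocks₂₂)⁻¹ * A.toBlocks₂₁

theorem stmt_8 (s r : ℕ)
    (A : Matrix (Fin s ⊕ Fin r) (Fin s ⊕ Fin r) ℂ)
    (t : ℂ) (ht : t ≠ 0)
    (hIA : IsUnit ((1 : Matrix (Fin s ⊕ Fin r) (Fin s ⊕ Fin r) ℂ) - t • A).det)
    (hF : IsUnit (t⁻¹ • (1 : Matrix (Fin r) (Fin r) ℂ) - A.toBlocks₂₂).det) :
    (((1 : Matrix (Fin s ⊕ Fin r) (Fin s ⊕ Fin r) ℂ) - t • A)⁻¹).toBlocks₁₁ =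
      ((1 : Matrix (Fin s) (Fin s) ℂ) - t • red t⁻¹ A)⁻¹ := by
  set A11 := A.toBlocks₁₁
  set A12 := A.toBlocks₁₂
  set A21 := A.toBlocks₂₁
  set A22 := A.toBlocks₂₂
  set F : Matrix (Fin r) (Fin r) ℂ := t⁻¹ • (1 : Matrix (Fin r) (Fin r) ℂ) - A22 with hFdef
  set D : Matrix (Fin r) (Fin r) ℂ := (1 : Matrix (Fin r) (Fin r) ℂ) - t • A22 with hDdef
  have hDF : D = t • F := by
    rw [hFdef, hDdef, smul_sub, smul_smul, mul_inv_cancel₀ ht, one_smul]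
  have hM : (1 : Matrix (Fin s ⊕ Fin r) (Fin s ⊕ Fin r) ℂ) - t • A =
      fromBlocks (1 - t • A11) (-(t • A12)) (-(t • A21)) D := by
    ext (i | i) (j | j) <;>
      simp [fromBlocks, A11, A12, A21, A22, D, toBlocks₁₁, toBlocks₁₂, toBlocks₂₁, toBlocks₂₂,
        Matrix.one_apply, sub_eq_add_neg]
  haveI hFi : Invertible F := F.invertibleOfIsUnitDet hF
  haveI hDi : Invertible D := by
    rw [hDF]
    refine ⟨t⁻¹ • ⅟F, ?_, ?_⟩ <;>
      simp [Matrix.smul_mul, Matrix.mul_smul, smul_smul, inv_mul_cancel₀ ht,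
        mul_inv_cancel₀ ht, invOf_mul_self, mul_invOf_self]
  haveI hMi : Invertible ((1 : Matrix (Fin s ⊕ Fin r) (Fin s ⊕ Fin r) ℂ) - t • A) :=
    Matrix.invertibleOfIsUnitDet _ hIA
  haveI hMi' : Invertible (fromBlocks (1 - t • A11) (-(t • A12)) (-(t • A21)) D) := hM ▸ hMi
  haveI hSi : Invertible ((1 - t • A11) - (-(t • A12)) * ⅟D * (-(t • A21))) :=
    invertibleOfFromBlocks₂₂Invertible _ _ _ _
  have hinvD : (⅟D : Matrix (Fin r) (Fin r) ℂ) = t⁻¹ • ⅟F := by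
    apply invOf_eq_right_inv
    rw [hDF, Matrix.smul_mul, Matrix.mul_smul, smul_smul, mul_inv_cancel₀ ht, one_smul,
      mul_invOf_self]
  have hSchur : (1 - t • A11) - (-(t • A12)) * ⅟D * (-(t • A21)) =
      1 - t • red t⁻¹ A := by
    rw [hinvD, red, invOf_eq_nonsing_inv]
    simp only [Matrix.neg_mul, Matrix.mul_neg, neg_neg, Matrix.smul_mul, Matrix.mul_smul,
      smul_smul, smul_add, inv_mul_cancel₀ ht, mul_inv_cancel₀ ht, one_smul, sub_sub,
      Matrix.mul_assoc]
    rfl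
  calc (((1 : Matrix (Fin s ⊕ Fin r) (Fin s ⊕ Fin r) ℂ) - t • A)⁻¹).toBlocks₁₁
      = ((fromBlocks (1 - t • A11) (-(t • A12)) (-(t • A21)) D)⁻¹).toBlocks₁₁ := by
        rw [hM]
    _ = (⅟(fromBlocks (1 - t • A11) (-(t • A12)) (-(t • A21)) D)).toBlocks₁₁ := by
        rw [invOf_eq_nonsing_inv]
    _ = ⅟((1 - t • A11) - (-(t • A12)) * ⅟D * (-(t • A21))) := by
        rw [invOf_fromBlocks₂₂_eq, toBlocks_fromBlocks₁₁]
    _ = ((1 : Matrix (Fin s) (Fin s) ℂ) - t • red t⁻¹ A)⁻¹ := by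
        rw [invOf_eq_nonsing_inv, hSchur]
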